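/- For every Young diagram λ with n = |λ| boxes, ∑_{Λ : λ ↗ Λ} dim Λ = (n + 1) · dim λ, where the sum runs over all Young diagrams Λ obtained from λ by adding one box. -/

import Mathlib

/-- `ν` is obtained from `μ` by adding a single box (`μ ↗ ν`). -/
def YDCovers (μ ν : YoungDiagram) : Prop :=
  ∃ c ∉ μ.cells, ν.cells = insert c μ.cells

/-- `dim λ`: the number of standard Young tableaux of shape `λ`, i.e. the number of
chains `∅ = λ⁰ ↗ λ¹ ↗ ⋯ ↗ λⁿ = λ` in the Young lattice. -/
noncomputable def dimYD (μ : YoungDiagram) : ℕ :=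
  Nat.card {L : List YoungDiagram //
    List.Chain' YDCovers L ∧ L.head? = some ⊥ ∧ L.getLast? = some μ}

open Finset

namespace YDaux

instance : DecidableEq YoungDiagram := fun μ ν =>
  decidable_of_iff (μ.cells = ν.cells) (YoungDiagram.ext_iff).symm

lemma covers_lt {μ ν : YoungDiagram} (h : YDCovers μ ν) : μ < ν := by
  obtain ⟨c, hc, hcells⟩ := h
  rw [← YoungDiagram.cells_ssubset_iff, hcells]
  exact Finset.ssubset_insert hc

lemma covers_card {μ ν : YoungDiagram} (h : YDCovers μ ν) : ν.card = μ.card + 1 := by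
  obtain ⟨c, hc, hcells⟩ := h
  rw [YoungDiagram.card, hcells, Finset.card_insert_of_notMem hc]

/-- rectangle diagram with rows 0..i, cols 0..j -/
def rect (i j : ℕ) : YoungDiagram where
  cells := Finset.range (i+1) ×ˢ Finset.range (j+1)
  isLowerSet := by
    rintro ⟨a,b⟩ ⟨x,y⟩ ⟨h1,h2⟩ h
    simp only [Finset.coe_product, Finset.coe_range, Set.mem_prod, Set.mem_Iio] at h ⊢
    exact ⟨lt_of_le_of_lt h1 h.1, lt_of_le_of_lt h2 h.2⟩

@[simp] lemma mem_rect {i j : ℕ} {c : ℕ × ℕ} : c ∈ rect i j ↔ c.1 ≤ i ∧ c.2 ≤ j := by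
  cases c; rw [← YoungDiagram.mem_cells]; simp [rect, Nat.lt_succ_iff]

def addBox (μ : YoungDiagram) (i : ℕ) : YoungDiagram := μ ⊔ rect i (μ.rowLen i)

def removeBox (μ : YoungDiagram) (i : ℕ) : YoungDiagram where
  cells := μ.cells.filter (fun c => ¬((i, μ.rowLen i - 1) ≤ c))
  isLowerSet := by
    rintro x y hxy h
    simp only [Finset.coe_filter, Set.mem_setOf_eq, YoungDiagram.mem_cells] at h ⊢
    exact ⟨μ.isLowerSet hxy h.1, fun hc => h.2 (hc.trans hxy)⟩

/-- rows where a box can be added -/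
def upA (μ : YoungDiagram) : Finset ℕ :=
  (Finset.range (μ.colLen 0 + 1)).filter (fun i => i = 0 ∨ μ.rowLen i < μ.rowLen (i-1))

/-- rows where a box can be removed -/
def downA (μ : YoungDiagram) : Finset ℕ :=
  (Finset.range (μ.colLen 0)).filter (fun i => μ.rowLen (i+1) < μ.rowLen i)

def upF (μ : YoungDiagram) : Finset YoungDiagram := (upA μ).image (addBox μ)

def downF (μ : YoungDiagram) : Finset YoungDiagram := (downA μ).image (removeBox μ)

lemma addBox_cells {μ : YoungDiagram} {i : ℕ} (hi : i ∈ upA μ) :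
    (addBox μ i).cells = insert (i, μ.rowLen i) μ.cells := by
  simp only [upA, Finset.mem_filter, Finset.mem_range] at hi
  ext ⟨a, b⟩
  simp only [addBox, YoungDiagram.cells_sup, Finset.mem_union, Finset.mem_insert,
    YoungDiagram.mem_cells, mem_rect, Prod.mk.injEq]
  constructor
  · rintro (h | ⟨ha, hb⟩)
    · exact Or.inr h
    · rcases eq_or_lt_of_le ha with rfl | ha'
      · rcases eq_or_lt_of_le hb with rfl | hb'
        · exact Or.inl ⟨rfl, rfl⟩
        · exact Or.inr (YoungDiagram.mem_iff_lt_rowLen.2 hb')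
      · rcases hi.2 with rfl | hlt
        · omega
        · refine Or.inr (YoungDiagram.mem_iff_lt_rowLen.2 ?_)
          have h1 : μ.rowLen (i-1) ≤ μ.rowLen a := μ.rowLen_anti a (i-1) (by omega)
          omega
  · rintro (⟨rfl, rfl⟩ | h)
    · exact Or.inr ⟨le_refl _, le_refl _⟩
    · exact Or.inl h

lemma removeBox_cells {μ : YoungDiagram} {i : ℕ} (hi : i ∈ downA μ) :
    (removeBox μ i).cells = μ.cells.erase (i, μ.rowLen i - 1) := by
  simp only [downA, Finset.mem_filter, Finset.mem_range] at hi
  ext ⟨a, b⟩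
  simp only [removeBox, Finset.mem_filter, Finset.mem_erase, ne_eq, Prod.mk.injEq,
    Prod.mk_le_mk, YoungDiagram.mem_cells]
  constructor
  · rintro ⟨h1, h2⟩
    refine ⟨fun h => h2 ?_, h1⟩
    obtain ⟨rfl, rfl⟩ := h
    exact ⟨le_rfl, le_rfl⟩
  · rintro ⟨hne, h1⟩
    refine ⟨h1, fun h => hne ?_⟩
    obtain ⟨hia, hb⟩ := h
    have hbr : b < μ.rowLen a := YoungDiagram.mem_iff_lt_rowLen.1 h1
    rcases Nat.lt_or_ge i a with h | h
    · have : μ.rowLen a ≤ μ.rowLen (i+1) := μ.rowLen_anti (i+1) a (by omega)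
      omega
    · have ha : a = i := by omega
      subst ha
      exact ⟨rfl, by omega⟩

lemma mem_upF {μ Λ : YoungDiagram} : Λ ∈ upF μ ↔ YDCovers μ Λ := by
  constructor
  · intro h
    simp only [upF, Finset.mem_image] at h
    obtain ⟨i, hi, rfl⟩ := h
    refine ⟨(i, μ.rowLen i), ?_, addBox_cells hi⟩
    simp [YoungDiagram.mem_iff_lt_rowLen]
  · rintro ⟨⟨i, j⟩, hc, hcells⟩
    rw [YoungDiagram.mem_cells] at hc
    have hmem : ∀ a b, (a, b) ∈ Λ ↔ (a,b) = (i,j) ∨ (a,b) ∈ μ := by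
      intro a b
      rw [← YoungDiagram.mem_cells, hcells]; simp
    have hj : j = μ.rowLen i := by
      have h1 : μ.rowLen i ≤ j := by
        by_contra h
        exact hc (YoungDiagram.mem_iff_lt_rowLen.2 (by omega))
      rcases Nat.eq_or_lt_of_le h1 with h | h
      · omega
      · exfalso
        have : (i, μ.rowLen i) ∈ Λ := Λ.up_left_mem le_rfl (le_of_lt h)
          ((hmem i j).2 (Or.inl rfl))
        rcases (hmem i (μ.rowLen i)).1 this with h' | h'
        · simp only [Prod.mk.injEq] at h'; omega
        · exact absurd h' (by simp [YoungDiagram.mem_iff_lt_rowLen])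
    subst hj
    have hiA : i ∈ upA μ := by
      simp only [upA, Finset.mem_filter, Finset.mem_range]
      constructor
      · rcases Nat.eq_zero_or_pos i with rfl | hpos
        · omega
        · have : (i-1, 0) ∈ μ := by
            have h1 : (i-1, μ.rowLen i) ∈ Λ := Λ.up_left_mem (by omega) le_rfl
              ((hmem i _).2 (Or.inl rfl))
            rcases (hmem _ _).1 h1 with h' | h'
            · simp only [Prod.mk.injEq] at h'; omega
            · exact μ.up_left_mem le_rfl (Nat.zero_le _) h'
          have := YoungDiagram.mem_iff_lt_colLen.1 this
          omega
      · rcases Nat.eq_zero_or_pos i with rfl | hpos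
        · exact Or.inl rfl
        · refine Or.inr ?_
          have h1 : (i-1, μ.rowLen i) ∈ Λ := Λ.up_left_mem (by omega) le_rfl
            ((hmem i _).2 (Or.inl rfl))
          rcases (hmem _ _).1 h1 with h' | h'
          · simp only [Prod.mk.injEq] at h'; omega
          · have := YoungDiagram.mem_iff_lt_rowLen.1 h'
            omega
    simp only [upF, Finset.mem_image]
    refine ⟨i, hiA, ?_⟩
    ext1
    rw [addBox_cells hiA, hcells]

lemma mem_downF {μ ν : YoungDiagram} : ν ∈ downF μ ↔ YDCovers ν μ := by
  constructor
  · intro h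
    simp only [downF, Finset.mem_image] at h
    obtain ⟨i, hi, rfl⟩ := h
    have hpos : 0 < μ.rowLen i := by
      simp only [downA, Finset.mem_coe, Finset.mem_filter, Finset.mem_range] at hi; omega
    have hcmem : (i, μ.rowLen i - 1) ∈ μ.cells := by
      rw [YoungDiagram.mem_cells, YoungDiagram.mem_iff_lt_rowLen]; omega
    refine ⟨(i, μ.rowLen i - 1), ?_, ?_⟩
    · rw [removeBox_cells hi]
      simp
    · rw [removeBox_cells hi, Finset.insert_erase hcmem]
  · rintro ⟨⟨i, j⟩, hc, hcells⟩
    rw [YoungDiagram.mem_cells] at hc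
    have hcmem : (i, j) ∈ μ := by
      rw [← YoungDiagram.mem_cells, hcells]; simp
    have hνcells : ν.cells = μ.cells.erase (i, j) := by
      rw [hcells, Finset.erase_insert (by simpa using hc)]
    -- (i, j+1) ∉ μ and (i+1, j) ∉ μ
    have hright : (i, j+1) ∉ μ := by
      intro h
      have h' : (i, j+1) ∈ ν := by
        rw [← YoungDiagram.mem_cells, hνcells]
        simp only [Finset.mem_erase, YoungDiagram.mem_cells]
        exact ⟨by simp, h⟩
      exact hc (ν.up_left_mem le_rfl (Nat.le_succ j) h')
    have hdown : (i+1, j) ∉ μ := by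
      intro h
      have h' : (i+1, j) ∈ ν := by
        rw [← YoungDiagram.mem_cells, hνcells]
        simp only [Finset.mem_erase, YoungDiagram.mem_cells]
        exact ⟨by simp, h⟩
      exact hc (ν.up_left_mem (Nat.le_succ i) le_rfl h')
    have hj : j + 1 = μ.rowLen i := by
      have h1 := YoungDiagram.mem_iff_lt_rowLen.1 hcmem
      have h2 : ¬ (j+1 < μ.rowLen i) := fun h => hright (YoungDiagram.mem_iff_lt_rowLen.2 h)
      omega
    have hiA : i ∈ downA μ := by
      simp only [downA, Finset.mem_filter, Finset.mem_range]
      have h2 : ¬ (j < μ.rowLen (i+1)) := fun h => hdown (YoungDiagram.mem_iff_lt_rowLen.2 h)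
      have h3 : i < μ.colLen 0 := YoungDiagram.mem_iff_lt_colLen.1
        (μ.up_left_mem le_rfl (Nat.zero_le _) hcmem)
      omega
    simp only [downF, Finset.mem_image]
    refine ⟨i, hiA, ?_⟩
    ext1
    rw [removeBox_cells hiA, hνcells, ← hj]
    simp

lemma upA_eq {μ : YoungDiagram} : upA μ = insert 0 ((downA μ).image (· + 1)) := by
  ext i
  simp only [upA, downA, Finset.mem_insert, Finset.mem_image, Finset.mem_filter, Finset.mem_range]
  constructor
  · rintro ⟨h1, h2 | h2⟩
    · exact Or.inl h2
    · rcases Nat.eq_zero_or_pos i with rfl | hpos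
      · exact Or.inl rfl
      · exact Or.inr ⟨i - 1, ⟨by omega, by
          have : i - 1 + 1 = i := by omega
          rw [this]; omega⟩, by omega⟩
  · rintro (rfl | ⟨k, ⟨hk1, hk2⟩, rfl⟩)
    · exact ⟨by omega, Or.inl rfl⟩
    · exact ⟨by omega, Or.inr (by simpa using hk2)⟩

lemma card_upF {μ : YoungDiagram} : (upF μ).card = (downF μ).card + 1 := by
  have h1 : (upF μ).card = (upA μ).card := by
    rw [upF]
    apply Finset.card_image_of_injOn
    intro i hi j hj hij
    have hicells := addBox_cells hi
    have hjcells := addBox_cells hj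
    rw [hij] at hicells
    have : (j, μ.rowLen j) ∈ insert (i, μ.rowLen i) μ.cells := by
      rw [← hicells, hjcells]; exact Finset.mem_insert_self _ _
    rcases Finset.mem_insert.1 this with h | h
    · exact (Prod.mk.injEq .. ▸ h).1.symm ▸ rfl
    · exfalso
      rw [YoungDiagram.mem_cells, YoungDiagram.mem_iff_lt_rowLen] at h
      omega
  have h2 : (downF μ).card = (downA μ).card := by
    rw [downF]
    apply Finset.card_image_of_injOn
    intro i hi j hj hij
    have hipos : 0 < μ.rowLen i := by simp only [downA, Finset.mem_coe, Finset.mem_filter, Finset.mem_range] at hi; omega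
    have hjpos : 0 < μ.rowLen j := by simp only [downA, Finset.mem_coe, Finset.mem_filter, Finset.mem_range] at hj; omega
    have hicells := removeBox_cells hi
    have hjcells := removeBox_cells hj
    rw [hij] at hicells
    by_contra hne
    have hmem : (i, μ.rowLen i - 1) ∈ μ.cells.erase (j, μ.rowLen j - 1) := by
      apply Finset.mem_erase.2
      refine ⟨by simp [Prod.ext_iff]; omega, ?_⟩
      rw [YoungDiagram.mem_cells, YoungDiagram.mem_iff_lt_rowLen]; omega
    rw [← hjcells, hicells] at hmem
    exact absurd (Finset.mem_erase.1 hmem).1 (by simp)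
  rw [h1, h2, upA_eq]
  rw [Finset.card_insert_of_notMem (by simp), Finset.card_image_of_injective _ (add_left_injective 1)]

/-- Diamond lemma, downward: two distinct diagrams covered by the same diagram. -/
lemma diamond_down {lam nu Lam : YoungDiagram} (h1 : YDCovers lam Lam) (h2 : YDCovers nu Lam)
    (hne : nu ≠ lam) :
    YDCovers (lam ⊓ nu) lam ∧ YDCovers (lam ⊓ nu) nu ∧ lam ⊔ nu = Lam := by
  obtain ⟨b, hb, hbc⟩ := h1
  obtain ⟨c, hc, hcc⟩ := h2
  have hbc' : b ≠ c := by
    rintro rfl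
    apply hne
    ext1
    have h := hbc.symm.trans hcc
    have : lam.cells = nu.cells := by
      have e1 := Finset.erase_insert hb
      have e2 := Finset.erase_insert hc
      rw [← e1, ← e2, h]
    rw [this]
  have hcl : c ∈ lam.cells := by
    have : c ∈ Lam.cells := by rw [hcc]; exact Finset.mem_insert_self _ _
    rw [hbc] at this
    rcases Finset.mem_insert.1 this with h | h
    · exact absurd h.symm hbc'
    · exact h
  have hbn : b ∈ nu.cells := by
    have : b ∈ Lam.cells := by rw [hbc]; exact Finset.mem_insert_self _ _
    rw [hcc] at this
    rcases Finset.mem_insert.1 this with h | h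
    · exact absurd h hbc'
    · exact h
  have hnu : nu.cells = insert b (lam.cells.erase c) := by
    have : nu.cells = Lam.cells.erase c := by
      rw [hcc, Finset.erase_insert (by simpa using hc)]
    rw [this, hbc, Finset.erase_insert_of_ne hbc']
  have hinf : (lam ⊓ nu).cells = lam.cells.erase c := by
    rw [YoungDiagram.cells_inf, hnu]
    ext x
    simp only [Finset.mem_inter, Finset.mem_insert, Finset.mem_erase]
    constructor
    · rintro ⟨hx1, rfl | hx2⟩
      · exact absurd hx1 hb
      · exact ⟨hx2.1, hx1⟩
    · rintro ⟨hx1, hx2⟩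
      exact ⟨hx2, Or.inr ⟨hx1, hx2⟩⟩
  refine ⟨⟨c, by simp [hinf], by rw [hinf, Finset.insert_erase hcl]⟩,
    ⟨b, by simp [hinf, hb], by rw [hinf, hnu]⟩, ?_⟩
  ext1
  rw [YoungDiagram.cells_sup, hnu, hbc]
  ext x
  simp only [Finset.mem_union, Finset.mem_insert, Finset.mem_erase]
  constructor
  · rintro (h | rfl | ⟨h1, h2⟩)
    · exact Or.inr h
    · exact Or.inl rfl
    · exact Or.inr h2
  · rintro (rfl | h)
    · exact Or.inr (Or.inl rfl)
    · by_cases hxc : x = c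
      · subst hxc; exact Or.inl h
      · exact Or.inr (Or.inr ⟨hxc, h⟩)

/-- Diamond lemma, upward: two distinct diagrams covering the same diagram. -/
lemma diamond_up {mu lam nu : YoungDiagram} (h1 : YDCovers mu lam) (h2 : YDCovers mu nu)
    (hne : nu ≠ lam) :
    YDCovers lam (lam ⊔ nu) ∧ YDCovers nu (lam ⊔ nu) ∧ lam ⊓ nu = mu := by
  obtain ⟨b, hb, hbc⟩ := h1
  obtain ⟨c, hc, hcc⟩ := h2
  have hbc' : b ≠ c := by
    rintro rfl
    exact hne (by ext1; rw [hcc, hbc])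
  have hsup : (lam ⊔ nu).cells = insert c lam.cells := by
    rw [YoungDiagram.cells_sup, hbc, hcc]
    ext x
    simp only [Finset.mem_union, Finset.mem_insert]
    tauto
  have hsup' : (lam ⊔ nu).cells = insert b nu.cells := by
    rw [YoungDiagram.cells_sup, hbc, hcc]
    ext x
    simp only [Finset.mem_union, Finset.mem_insert]
    tauto
  have hcl : c ∉ lam.cells := by
    rw [hbc]
    simp only [Finset.mem_insert]
    rintro (h | h)
    · exact hbc' h.symm
    · exact hc h
  have hbn : b ∉ nu.cells := by
    rw [hcc]
    simp only [Finset.mem_insert]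
    rintro (h | h)
    · exact hbc' h
    · exact hb h
  refine ⟨⟨c, hcl, hsup⟩, ⟨b, hbn, hsup'⟩, ?_⟩
  ext1
  rw [YoungDiagram.cells_inf, hbc, hcc]
  ext x
  simp only [Finset.mem_inter, Finset.mem_insert]
  constructor
  · rintro ⟨h1, h2⟩
    rcases h1 with rfl | h1
    · rcases h2 with h2 | h2
      · exact absurd h2 hbc'
      · exact absurd h2 hb
    · exact h1
  · intro h
    exact ⟨Or.inr h, Or.inr h⟩

def ChainsTo (μ : YoungDiagram) :=
  {L : List YoungDiagram //
    List.Chain' YDCovers L ∧ L.head? = some ⊥ ∧ L.getLast? = some μ}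

lemma dimYD_eq (μ : YoungDiagram) : dimYD μ = Nat.card (ChainsTo μ) := rfl

lemma chain_lt_getLast : ∀ {l : List YoungDiagram} {a b : YoungDiagram},
    List.Chain (· < ·) a l → l.getLast? = some b → a < b
  | [], _, _, _, h => by simp at h
  | [x], a, b, hc, h => by
      simp only [List.getLast?_singleton, Option.some.injEq] at h
      subst h; exact (List.chain_cons.1 hc).1
  | x :: y :: l, a, b, hc, h => by
      rw [List.getLast?_cons_cons] at h
      exact lt_trans (List.chain_cons.1 hc).1 (chain_lt_getLast (List.chain_cons.1 hc).2 h)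

lemma chainsTo_bot_eq (L : ChainsTo ⊥) : L.1 = [⊥] := by
  obtain ⟨l, h1, h2, h3⟩ := L
  cases l with
  | nil => simp at h2
  | cons a m =>
    simp only [List.head?_cons, Option.some.injEq] at h2
    subst h2
    cases m with
    | nil => rfl
    | cons b m' =>
      exfalso
      rw [List.getLast?_cons_cons] at h3
      have hch : List.Chain YDCovers ⊥ (b :: m') := h1
      have hlt : List.Chain (· < ·) ⊥ (b :: m') := (show List.IsChain YDCovers (⊥ :: b :: m') from hch).imp (fun a b h => covers_lt h)
      exact absurd (chain_lt_getLast hlt h3) (lt_irrefl _)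

instance : Unique (ChainsTo ⊥) where
  default := ⟨[⊥], List.isChain_singleton _, by simp, by simp⟩
  uniq L := Subtype.ext (by rw [chainsTo_bot_eq L])

lemma append_prop {μ ν : YoungDiagram} (hν : ν ∈ downF μ) {L : List YoungDiagram}
    (h1 : List.Chain' YDCovers L) (h2 : L.head? = some ⊥) (h3 : L.getLast? = some ν) :
    List.Chain' YDCovers (L ++ [μ]) ∧ (L ++ [μ]).head? = some ⊥ ∧
      (L ++ [μ]).getLast? = some μ := by
  have hne : L ≠ [] := by rintro rfl; simp at h2
  refine ⟨?_, ?_, List.getLast?_concat⟩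
  · refine List.isChain_append.2 ⟨h1, List.isChain_singleton μ, ?_⟩
    intro a ha y hy
    simp only [List.head?_cons, Option.mem_def, Option.some.injEq] at hy
    subst hy
    rw [Option.mem_def, h3] at ha
    cases ha
    exact mem_downF.1 hν
  · rw [List.head?_append_of_ne_nil _ hne]
    exact h2

/-- Append `μ` to a chain ending at some `ν ∈ downF μ`. -/
def appendF (μ : YoungDiagram) (x : Σ ν : ↥(downF μ), ChainsTo ν.1) : ChainsTo μ :=
  ⟨x.2.1 ++ [μ], append_prop x.1.2 x.2.2.1 x.2.2.2.1 x.2.2.2.2⟩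

lemma appendF_bijective {μ : YoungDiagram} (hμ : μ ≠ ⊥) : Function.Bijective (appendF μ) := by
  constructor
  · rintro ⟨⟨ν, hν⟩, ⟨L, hL1, hL2, hL3⟩⟩ ⟨⟨ν', hν'⟩, ⟨L', hL1', hL2', hL3'⟩⟩ h
    have hLL : L = L' := by
      have := congrArg Subtype.val h
      simpa [appendF] using this
    subst hLL
    have hνν : ν = ν' := by
      have := hL3.symm.trans hL3'
      exact Option.some_injective _ this
    subst hνν
    rfl
  · rintro ⟨L, h1, h2, h3⟩
    have hdec : L.dropLast ++ [μ] = L := List.dropLast_append_getLast? μ h3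
    have hne' : L.dropLast ≠ [] := by
      intro h
      rw [h, List.nil_append] at hdec
      rw [← hdec] at h2
      simp only [List.head?_cons, Option.some.injEq] at h2
      exact hμ h2
    obtain ⟨ν, hν⟩ : ∃ ν, L.dropLast.getLast? = some ν := by
      cases hg : L.dropLast.getLast? with
      | none => exact absurd (List.getLast?_eq_none_iff.1 hg) hne'
      | some v => exact ⟨v, rfl⟩
    have h1' := h1
    rw [← hdec] at h1'
    obtain ⟨hc1, _, hrel⟩ := List.isChain_append.1 h1'
    have hcov : YDCovers ν μ := hrel ν hν μ rfl
    have h2' : L.dropLast.head? = some ⊥ := by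
      rw [← hdec, List.head?_append_of_ne_nil _ hne'] at h2
      exact h2
    refine ⟨⟨⟨ν, mem_downF.2 hcov⟩, ⟨L.dropLast, hc1, h2', hν⟩⟩, ?_⟩
    exact Subtype.ext hdec

lemma finite_chainsTo : ∀ (μ : YoungDiagram), Finite (ChainsTo μ) := by
  have : ∀ (n : ℕ) (μ : YoungDiagram), μ.card = n → Finite (ChainsTo μ) := by
    intro n
    induction n using Nat.strong_induction_on with
    | _ n ih =>
      intro μ hn
      rcases eq_or_ne μ ⊥ with rfl | hμ
      · infer_instance
      · haveI : ∀ ν : ↥(downF μ), Finite (ChainsTo ν.1) := by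
          rintro ⟨ν, hν⟩
          have hc := covers_card (mem_downF.1 hν)
          have hpos : μ.card ≠ 0 := by
            intro h
            exact hμ (by ext1; simpa [← Finset.card_eq_zero] using h)
          exact ih ν.card (by omega) ν rfl
        exact Finite.of_surjective (appendF μ) (appendF_bijective hμ).2
  exact fun μ => this μ.card μ rfl

lemma dim_bot : dimYD ⊥ = 1 := by
  rw [dimYD_eq]
  exact Nat.card_unique

lemma dim_rec (μ : YoungDiagram) (hμ : μ ≠ ⊥) :
    dimYD μ = ∑ ν ∈ downF μ, dimYD ν := by
  haveI : ∀ ν : YoungDiagram, Finite (ChainsTo ν) := finite_chainsTo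
  haveI : ∀ ν : YoungDiagram, Fintype (ChainsTo ν) := fun ν => Fintype.ofFinite _
  rw [dimYD_eq, ← Nat.card_congr (Equiv.ofBijective _ (appendF_bijective hμ))]
  rw [Nat.card_eq_fintype_card, Fintype.card_sigma]
  rw [← Finset.sum_coe_sort (downF μ) (fun ν => dimYD ν)]
  exact Finset.sum_congr rfl (fun ν _ => by rw [dimYD_eq, Nat.card_eq_fintype_card])

lemma card_pos_of_ne_bot {μ : YoungDiagram} (h : μ ≠ ⊥) : 0 < μ.card := by
  rcases Nat.eq_zero_or_pos μ.card with h0 | h0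
  · exact absurd (by ext1; simpa [← Finset.card_eq_zero] using h0) h
  · exact h0

lemma key : ∀ (n : ℕ) (lam : YoungDiagram), lam.card = n →
    ∑ Λ ∈ upF lam, dimYD Λ = (n + 1) * dimYD lam := by
  intro n
  induction n using Nat.strong_induction_on with
  | _ n ih =>
    intro lam hcard
    rcases eq_or_ne lam ⊥ with rfl | hbot
    · -- base case : lam = ⊥, n = 0
      have hn0 : n = 0 := by rw [← hcard]; rfl
      subst hn0
      have hdim : ∀ Λ ∈ upF (⊥ : YoungDiagram), dimYD Λ = dimYD ⊥ := by
        intro Λ hΛ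
        have hcov := mem_upF.1 hΛ
        have hΛcard : Λ.card = 1 := by
          have h := covers_card hcov
          have h0 : (⊥ : YoungDiagram).card = 0 := rfl
          omega
        have hΛbot : Λ ≠ ⊥ := by
          intro h
          rw [h] at hΛcard
          exact absurd hΛcard (by rw [show (⊥ : YoungDiagram).card = 0 from rfl]; omega)
        rw [dim_rec Λ hΛbot]
        have hsingle : downF Λ = {⊥} := by
          apply Finset.eq_singleton_iff_unique_mem.2
          refine ⟨mem_downF.2 hcov, ?_⟩
          intro ν hν
          have := covers_card (mem_downF.1 hν)
          have hν0 : ν.card = 0 := by omega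
          ext1; simpa [← Finset.card_eq_zero] using hν0
        rw [hsingle, Finset.sum_singleton]
      rw [Finset.sum_congr rfl hdim, Finset.sum_const, smul_eq_mul]
      have hd0 : downF (⊥ : YoungDiagram) = ∅ := by
        rw [Finset.eq_empty_iff_forall_notMem]
        intro ν hν
        have h := covers_card (mem_downF.1 hν)
        have h0 : (⊥ : YoungDiagram).card = 0 := rfl
        omega
      rw [card_upF, hd0]
      simp
    · -- inductive step
      have hn1 : 1 ≤ n := by
        have := card_pos_of_ne_bot hbot; omega
      have expand : ∀ Λ ∈ upF lam,
          dimYD Λ = dimYD lam + ∑ ν ∈ (downF Λ).erase lam, dimYD ν := by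
        intro Λ hΛ
        have hcov := mem_upF.1 hΛ
        have hΛbot : Λ ≠ ⊥ := by
          intro h
          have := covers_card hcov
          rw [h] at this
          simp only [YoungDiagram.card, YoungDiagram.cells_bot, Finset.card_empty] at this
          omega
        rw [dim_rec Λ hΛbot,
          ← Finset.add_sum_erase _ _ (mem_downF.2 hcov)]
      rw [Finset.sum_congr rfl expand, Finset.sum_add_distrib, Finset.sum_const, smul_eq_mul,
        card_upF]
      have swap : ∑ Λ ∈ upF lam, ∑ ν ∈ (downF Λ).erase lam, dimYD ν
          = ∑ μ ∈ downF lam, ∑ ν ∈ (upF μ).erase lam, dimYD ν := by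
        rw [Finset.sum_sigma', Finset.sum_sigma']
        refine Finset.sum_bij' (fun p hp => (⟨lam ⊓ p.2, p.2⟩ : Σ _ : YoungDiagram, YoungDiagram))
          (fun p hp => (⟨lam ⊔ p.2, p.2⟩ : Σ _ : YoungDiagram, YoungDiagram))
          ?_ ?_ ?_ ?_ ?_
        · rintro ⟨Λ, ν⟩ hp
          rw [Finset.mem_sigma] at hp
          obtain ⟨hΛ, hν⟩ := hp
          rw [Finset.mem_erase] at hν
          obtain ⟨hne, hν⟩ := hν
          obtain ⟨d1, d2, _⟩ := diamond_down (mem_upF.1 hΛ) (mem_downF.1 hν) hne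
          rw [Finset.mem_sigma]
          exact ⟨mem_downF.2 d1, Finset.mem_erase.2 ⟨hne, mem_upF.2 d2⟩⟩
        · rintro ⟨μ, ν⟩ hp
          rw [Finset.mem_sigma] at hp
          obtain ⟨hμ, hν⟩ := hp
          rw [Finset.mem_erase] at hν
          obtain ⟨hne, hν⟩ := hν
          obtain ⟨d1, d2, _⟩ := diamond_up (mem_downF.1 hμ) (mem_upF.1 hν) hne
          rw [Finset.mem_sigma]
          exact ⟨mem_upF.2 d1, Finset.mem_erase.2 ⟨hne, mem_downF.2 d2⟩⟩
        · rintro ⟨Λ, ν⟩ hp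
          rw [Finset.mem_sigma] at hp
          obtain ⟨hΛ, hν⟩ := hp
          rw [Finset.mem_erase] at hν
          obtain ⟨hne, hν⟩ := hν
          obtain ⟨d1, d2, d3⟩ := diamond_down (mem_upF.1 hΛ) (mem_downF.1 hν) hne
          exact Sigma.ext d3 (heq_of_eq rfl)
        · rintro ⟨μ, ν⟩ hp
          rw [Finset.mem_sigma] at hp
          obtain ⟨hμ, hν⟩ := hp
          rw [Finset.mem_erase] at hν
          obtain ⟨hne, hν⟩ := hν
          obtain ⟨d1, d2, d3⟩ := diamond_up (mem_downF.1 hμ) (mem_upF.1 hν) hne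
          exact Sigma.ext d3 (heq_of_eq rfl)
        · rintro ⟨Λ, ν⟩ hp
          rfl
      rw [swap]
      have inner : ∀ μ ∈ downF lam,
          dimYD lam + ∑ ν ∈ (upF μ).erase lam, dimYD ν = n * dimYD μ := by
        intro μ hμ
        have hcov := mem_downF.1 hμ
        have hc : μ.card = n - 1 := by
          have := covers_card hcov; omega
        have hIH := ih (n-1) (by omega) μ hc
        rw [← Finset.add_sum_erase _ _ (mem_upF.2 hcov)] at hIH
        rw [hIH]
        congr 1
        omega
      have htot : ∑ μ ∈ downF lam,
          (dimYD lam + ∑ ν ∈ (upF μ).erase lam, dimYD ν) = n * dimYD lam := by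
        rw [Finset.sum_congr rfl inner, ← Finset.mul_sum, ← dim_rec lam hbot]
      rw [Finset.sum_add_distrib, Finset.sum_const, smul_eq_mul] at htot
      set a := (downF lam).card
      set d := dimYD lam
      set S := ∑ μ ∈ downF lam, ∑ ν ∈ (upF μ).erase lam, dimYD ν
      calc (a + 1) * d + S = (a * d + S) + d := by ring
      _ = n * d + d := by rw [htot]
      _ = (n + 1) * d := by ring

end YDaux

/-- For every Young diagram `λ` with `n = |λ|` boxes:
`∑_{Λ : λ ↗ Λ} dim Λ = (n + 1) dim λ`. -/
theorem sum_dim_covers (lam : YoungDiagram) (n : ℕ) (hn : n = lam.card) :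
    ∑ᶠ Λ ∈ {Λ : YoungDiagram | YDCovers lam Λ}, dimYD Λ = (n + 1) * dimYD lam := by
  have hset : {Λ : YoungDiagram | YDCovers lam Λ} = ↑(YDaux.upF lam) := by
    ext Λ
    simp [YDaux.mem_upF]
  rw [hset, finsum_mem_coe_finset]
  exact YDaux.key n lam hn.symm
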